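/- Let 𝒱 be a finite-dimensional real inner product space, A : 𝒱 → 𝒱 self-adjoint positive definite, b ∈ 𝒱 nonzero, and f(v) := (1/‖b‖²)·(½⟨Av, v⟩ − ⟨b, v⟩). Let L ∈ ℕ and let v_0, v_1, …, v_L be a chain in 𝒱 in which each v_{μ+1} is obtained from v_μ by a Galerkin micro-step, i.e. v_{μ+1} = v_μ + V_μ (V_μ† A V_μ)⁻¹ V_μ† (b − A v_μ) for some injective linear map V_μ : ℝ^{m_μ} → 𝒱. Then ⟨A (v_L − v_0), v_L − v_0⟩ ≤ 2 L ‖b‖² · (f(v_0) − f(v_L)). -/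

import Mathlib

open scoped RealInnerProductSpace

/-- Key estimate in the proof of Lemma 4.14: if `v 0, v 1, …, v L` is a chain in which each
`v (μ+1)` arises from `v μ` by a Galerkin micro-step
`v (μ+1) = v μ + V (V† A V)⁻¹ V† (b − A (v μ))` (the element `(V† A V)⁻¹ V† (b − A (v μ))`
being encoded as the solution `g` of the corresponding normal equation), then
`‖v L − v 0‖_A² ≤ 2 L ‖b‖² (f (v 0) − f (v L))` for the normalised quadratic objective
`f v = (1/‖b‖²)(½⟨Av, v⟩ − ⟨b, v⟩)`. -/
theorem stmt_9 {𝒱 : Type*} [NormedAddCommGroup 𝒱] [InnerProductSpace ℝ 𝒱]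
    [FiniteDimensional ℝ 𝒱]
    (A : 𝒱 →ₗ[ℝ] 𝒱) (hA_sym : ∀ v w, ⟪A v, w⟫ = ⟪v, A w⟫)
    (hA_pos : ∀ v, v ≠ 0 → 0 < ⟪A v, v⟫)
    (b : 𝒱) (hb : b ≠ 0)
    (L : ℕ) (v : ℕ → 𝒱)
    (hchain : ∀ μ < L, ∃ (m : ℕ) (V : EuclideanSpace ℝ (Fin m) →ₗ[ℝ] 𝒱),
      Function.Injective V ∧ ∃ g : EuclideanSpace ℝ (Fin m),
        (LinearMap.adjoint V) (A (V g)) = (LinearMap.adjoint V) (b - A (v μ)) ∧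
        v (μ + 1) = v μ + V g) :
    ⟪A (v L - v 0), v L - v 0⟫ ≤
      2 * L * ‖b‖ ^ 2 *
        ((1 / ‖b‖ ^ 2) * ((1 / 2) * ⟪A (v 0), v 0⟫ - ⟪b, v 0⟫) -
          (1 / ‖b‖ ^ 2) * ((1 / 2) * ⟪A (v L), v L⟫ - ⟪b, v L⟫)) := by
  have hb2 : (0:ℝ) < ‖b‖ ^ 2 := by
    have : 0 < ‖b‖ := norm_pos_iff.mpr hb
    positivity
  -- positivity of the quadratic form
  have hpos : ∀ u : 𝒱, 0 ≤ ⟪A u, u⟫ := by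
    intro u
    by_cases h : u = 0
    · simp [h]
    · exact (hA_pos u h).le
  -- cross term estimate
  have hcross : ∀ x y : 𝒱, 2 * ⟪A x, y⟫ ≤ ⟪A x, x⟫ + ⟪A y, y⟫ := by
    intro x y
    have h0 := hpos (x - y)
    have hxy : ⟪A y, x⟫ = ⟪A x, y⟫ := by
      rw [hA_sym y x, real_inner_comm]
    have : ⟪A (x - y), x - y⟫ =
        ⟪A x, x⟫ - 2 * ⟪A x, y⟫ + ⟪A y, y⟫ := by
      simp only [map_sub, inner_sub_left, inner_sub_right, hxy]
      ring
    linarith [this ▸ h0]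
  set d : ℕ → 𝒱 := fun μ => v (μ + 1) - v μ with hd
  set a : ℕ → ℝ := fun μ => ⟪A (d μ), d μ⟫ with ha
  -- step decrease
  have hstep : ∀ μ < L,
      ⟪A (v (μ+1)), v (μ+1)⟫ - 2 * ⟪b, v (μ+1)⟫ =
        ⟪A (v μ), v μ⟫ - 2 * ⟪b, v μ⟫ - a μ := by
    intro μ hμ
    obtain ⟨m, V, hVinj, g, hnormal, hstep⟩ := hchain μ hμ
    have hdμ : d μ = V g := by simp [hd, hstep]
    have hkey : ⟪A (V g), V g⟫ = ⟪b - A (v μ), V g⟫ := by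
      have h1 := congrArg (fun x => ⟪x, g⟫) hnormal
      simpa only [LinearMap.adjoint_inner_left] using h1
    have hsym2 : ⟪A (v μ), V g⟫ = ⟪A (V g), v μ⟫ := by
      rw [hA_sym, real_inner_comm]
    have hvv : ⟪A (v (μ+1)), v (μ+1)⟫ =
        ⟪A (v μ), v μ⟫ + 2 * ⟪A (v μ), V g⟫ + ⟪A (V g), V g⟫ := by
      rw [hstep]
      simp only [map_add, inner_add_left, inner_add_right, hsym2]
      ring
    have hbv : ⟪b, v (μ+1)⟫ = ⟪b, v μ⟫ + ⟪b, V g⟫ := by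
      rw [hstep, inner_add_right]
    have hkey' : ⟪A (V g), V g⟫ = ⟪b, V g⟫ - ⟪A (v μ), V g⟫ := by
      rw [hkey, inner_sub_left]
    rw [ha]
    simp only [hdμ, hvv, hbv]
    linarith
  -- telescoped energy identity
  have htel : ∀ n ≤ L,
      ⟪A (v n), v n⟫ - 2 * ⟪b, v n⟫ =
        ⟪A (v 0), v 0⟫ - 2 * ⟪b, v 0⟫ - ∑ μ ∈ Finset.range n, a μ := by
    intro n hn
    induction n with
    | zero => simp
    | succ k ih =>
      have hk : k < L := hn
      rw [hstep k hk, ih (Nat.le_of_lt hk), Finset.sum_range_succ]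
      ring
  -- telescoping of the iterates
  have hsum : v L - v 0 = ∑ μ ∈ Finset.range L, d μ := by
    rw [hd]
    exact (Finset.sum_range_sub (fun μ => v μ) L).symm
  set S : ℝ := ∑ μ ∈ Finset.range L, a μ with hS
  -- bound LHS by L * S
  have hLHS : ⟪A (v L - v 0), v L - v 0⟫ ≤ (L : ℝ) * S := by
    rw [hsum, map_sum, sum_inner]
    have hexp : ∀ μ, ⟪A (d μ), ∑ ν ∈ Finset.range L, d ν⟫ =
        ∑ ν ∈ Finset.range L, ⟪A (d μ), d ν⟫ := fun μ => inner_sum _ _ _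
    calc ∑ μ ∈ Finset.range L, ⟪A (d μ), ∑ ν ∈ Finset.range L, d ν⟫
        = ∑ μ ∈ Finset.range L, ∑ ν ∈ Finset.range L, ⟪A (d μ), d ν⟫ := by
          exact Finset.sum_congr rfl fun μ _ => hexp μ
      _ ≤ ∑ μ ∈ Finset.range L, ∑ ν ∈ Finset.range L, (a μ + a ν) / 2 := by
          refine Finset.sum_le_sum fun μ _ => Finset.sum_le_sum fun ν _ => ?_
          have := hcross (d μ) (d ν)
          rw [ha]; linarith
      _ = (L : ℝ) * S := by
          have h1 : ∀ μ, ∑ ν ∈ Finset.range L, (a μ + a ν) / 2 =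
              ((L:ℝ) * a μ + S) / 2 := by
            intro μ
            rw [← Finset.sum_div, Finset.sum_add_distrib, Finset.sum_const,
              Finset.card_range, nsmul_eq_mul, ← hS]
          rw [Finset.sum_congr rfl fun μ _ => h1 μ, ← Finset.sum_div,
            Finset.sum_add_distrib, ← Finset.mul_sum, ← hS, Finset.sum_const,
            Finset.card_range, nsmul_eq_mul]
          ring
  -- RHS equals L * S
  have hRHS : 2 * (L:ℝ) * ‖b‖ ^ 2 *
        ((1 / ‖b‖ ^ 2) * ((1 / 2) * ⟪A (v 0), v 0⟫ - ⟪b, v 0⟫) -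
          (1 / ‖b‖ ^ 2) * ((1 / 2) * ⟪A (v L), v L⟫ - ⟪b, v L⟫)) = (L:ℝ) * S := by
    have h := htel L le_rfl
    have hb2' : ‖b‖ ^ 2 ≠ 0 := ne_of_gt hb2
    rw [← hS] at h
    field_simp
    linear_combination (-(L:ℝ)) * h
  rw [hRHS]
  exact hLHS
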